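/- For integers m ≥ d ≥ 1 and b ≥ 2, let n = b^m and define for 0 ≤ i < n the points x_i = (i/n, ib/n, ib²/n, …, ib^{d−1}/n) mod 1 (coordinatewise fractional part). Then the points x_0,…,x_{n−1} form an NNLD point set. -/

import Mathlib

open Finset

private lemma cnt_period (P : ℕ → Prop) [DecidablePred P] (Q : ℕ)
    (hP : ∀ s, P (Q + s) ↔ P s) (t : ℕ) :
    ((range (Q + t)).filter P).card = ((range Q).filter P).card + ((range t).filter P).card := by
  rw [Finset.range_add, Finset.filter_union,
    Finset.card_union_of_disjoint, Finset.filter_map, Finset.card_map]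
  · congr 1
    apply Finset.card_nbij id
    · intro s hs
      simp only [Finset.coe_filter, Set.mem_setOf_eq, Finset.mem_filter, Finset.mem_range, Function.comp_apply,
        addLeftEmbedding_apply] at hs ⊢
      exact ⟨hs.1, (hP s).mp hs.2⟩
    · intro s hs t ht h; exact h
    · intro s hs
      simp only [Finset.mem_filter, Finset.mem_range, Function.comp_apply, Set.mem_image,
        addLeftEmbedding_apply, Finset.coe_filter, Set.mem_setOf_eq] at hs ⊢
      exact ⟨s, ⟨hs.1, (hP s).mpr hs.2⟩, rfl⟩
  · rw [Finset.disjoint_left]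
    intro x hx hx'
    simp only [Finset.mem_filter, Finset.mem_range, Finset.mem_map,
      addLeftEmbedding_apply] at hx hx'
    obtain ⟨⟨s, hs, rfl⟩, -⟩ := hx'
    omega

private lemma cnt_blocks (P : ℕ → Prop) [DecidablePred P] (Q : ℕ)
    (hP : ∀ s, P (Q + s) ↔ P s) (a r : ℕ) :
    ((range (a * Q + r)).filter P).card
      = a * ((range Q).filter P).card + ((range r).filter P).card := by
  induction a with
  | zero => simp
  | succ a ih =>
    have : (a + 1) * Q + r = Q + (a * Q + r) := by ring
    rw [this, cnt_period P Q hP, ih]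
    ring

private lemma key (Q C : ℕ → ℕ) (hQ : ∀ j, 0 < Q j) (hdvd : ∀ j, Q j ∣ Q (j + 1))
    (hCQ : ∀ j, C j ≤ Q j) :
    ∀ k t, t * ∏ j ∈ range k, C j ≤
      ((range t).filter (fun s => ∀ j < k, s % Q j < C j)).card * ∏ j ∈ range k, Q j := by
  have hchain : ∀ j k, j ≤ k → Q j ∣ Q k := by
    intro j k h
    induction h with
    | refl => rfl
    | step h ih => exact dvd_trans ih (hdvd _)
  intro k
  induction k with
  | zero => intro t; simp
  | succ k ih =>
    intro t
    have hper : ∀ s, (∀ j < k + 1, (Q k + s) % Q j < C j) ↔ (∀ j < k + 1, s % Q j < C j) := by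
      intro s
      have hmod : ∀ j < k + 1, (Q k + s) % Q j = s % Q j := by
        intro j hj
        obtain ⟨c, hc⟩ := hchain j k (by omega)
        rw [hc, Nat.mul_add_mod]
      constructor
      · intro h j hj; rw [← hmod j hj]; exact h j hj
      · intro h j hj; rw [hmod j hj]; exact h j hj
    have hdecomp := cnt_blocks (fun s => ∀ j < k + 1, s % Q j < C j) (Q k) hper (t / Q k) (t % Q k)
    have ht : t = t / Q k * Q k + t % Q k := (Nat.div_add_mod' t (Q k)).symm
    have h1 : (range (Q k)).filter (fun s => ∀ j < k + 1, s % Q j < C j) = (range (C k)).filter (fun s => ∀ j < k, s % Q j < C j) := by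
      ext s
      simp only [Finset.mem_filter, Finset.mem_range]
      constructor
      · intro ⟨hs, h⟩
        have := h k (by omega)
        rw [Nat.mod_eq_of_lt hs] at this
        refine ⟨this, fun j hj => h j (by omega)⟩
      · intro ⟨hs, h⟩
        have hsQ : s < Q k := lt_of_lt_of_le hs (hCQ k)
        refine ⟨hsQ, fun j hj => ?_⟩
        rcases Nat.lt_or_ge j k with hj' | hj'
        · exact h j hj'
        · have : j = k := by omega
          subst this
          rw [Nat.mod_eq_of_lt hsQ]; exact hs
    have h2 : (range (t % Q k)).filter (fun s => ∀ j < k + 1, s % Q j < C j)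
        = (range (min (t % Q k) (C k))).filter (fun s => ∀ j < k, s % Q j < C j) := by
      have hr : t % Q k ≤ Q k := (Nat.mod_lt t (hQ k)).le
      ext s
      simp only [Finset.mem_filter, Finset.mem_range, lt_min_iff]
      constructor
      · intro ⟨hs, h⟩
        have := h k (by omega)
        rw [Nat.mod_eq_of_lt (by omega)] at this
        exact ⟨⟨hs, this⟩, fun j hj => h j (by omega)⟩
      · intro ⟨⟨hs, hsC⟩, h⟩
        refine ⟨hs, fun j hj => ?_⟩
        rcases Nat.lt_or_ge j k with hj' | hj'
        · exact h j hj'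
        · have : j = k := by omega
          subst this
          rw [Nat.mod_eq_of_lt (by omega)]; exact hsC
    rw [← ht] at hdecomp
    rw [hdecomp, h1, h2, Finset.prod_range_succ, Finset.prod_range_succ]
    have ih1 := ih (C k)
    have ih2 := ih (min (t % Q k) (C k))
    have hmin : (t % Q k) * C k ≤ min (t % Q k) (C k) * Q k := by
      rcases le_total (t % Q k) (C k) with h | h
      · rw [min_eq_left h]; exact Nat.mul_le_mul_left _ (hCQ k)
      · rw [min_eq_right h]
        rw [mul_comm]; exact Nat.mul_le_mul_left _ (Nat.mod_lt t (hQ k)).le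
    set A := ((range (C k)).filter (fun s => ∀ j < k, s % Q j < C j)).card
    set B := ((range (min (t % Q k) (C k))).filter (fun s => ∀ j < k, s % Q j < C j)).card
    set PC := ∏ j ∈ range k, C j
    set PQ := ∏ j ∈ range k, Q j
    calc t * (PC * C k) = (t / Q k * Q k + t % Q k) * (PC * C k) := by conv_lhs => rw [ht]
      _ = (t / Q k) * Q k * (C k * PC) + (t % Q k * C k) * PC := by ring
      _ ≤ (t / Q k) * Q k * (A * PQ) + (min (t % Q k) (C k) * Q k) * PC := by
              gcongr
      _ = (t / Q k) * A * (PQ * Q k) + (min (t % Q k) (C k) * PC) * Q k := by ring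
      _ ≤ (t / Q k) * A * (PQ * Q k) + (B * PQ) * Q k := by gcongr
      _ = ((t / Q k) * A + B) * (PQ * Q k) := by ring


private lemma frac_iff (b : ℕ) (hb : 0 < b) (u v i : ℕ) (x : ℝ) :
    Int.fract (((i * b ^ v : ℕ) : ℝ) / ((b : ℝ) ^ (u + v))) < x ↔
      i % b ^ u < (⌈x * (b : ℝ) ^ u⌉).toNat := by
  have hbu : (0:ℝ) < (b:ℝ) ^ u := by positivity
  have hbv : (0:ℝ) < (b:ℝ) ^ v := by positivity
  have hcast : ((b:ℝ)) ^ (u + v) = ((b ^ (u + v) : ℕ) : ℝ) := by push_cast; ring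
  rw [hcast, Int.fract_div_natCast_eq_div_natCast_mod]
  have hmod : (i * b ^ v) % b ^ (u + v) = (i % b ^ u) * b ^ v := by
    rw [pow_add, Nat.mul_mod_mul_right]
  rw [hmod]
  have h1 : (((i % b ^ u) * b ^ v : ℕ) : ℝ) / ((b ^ (u + v) : ℕ) : ℝ)
      = ((i % b ^ u : ℕ) : ℝ) / (b : ℝ) ^ u := by
    push_cast
    rw [pow_add]
    rw [mul_div_mul_right _ _ (ne_of_gt hbv)]
  rw [h1, div_lt_iff₀ hbu]
  rw [show ((i % b ^ u : ℕ) : ℝ) = (((i % b ^ u : ℕ) : ℤ) : ℝ) from by norm_cast,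
    ← Int.lt_ceil]
  exact Int.lt_toNat.symm


open Finset in
theorem stmt17 (b m d : ℕ) (hb : 2 ≤ b) (hd : 1 ≤ d) (hmd : d ≤ m)
    (z : Fin d → ℝ) (hz : ∀ j, z j ∈ Set.Icc (0:ℝ) 1) :
    ∏ j, z j ≤ (Nat.card {i : Fin (b ^ m) // ∀ j : Fin d,
        Int.fract ((i : ℝ) * (b : ℝ) ^ (j : ℕ) / (b ^ m : ℝ)) < z j} : ℝ) / (b ^ m : ℝ) := by
  have hb0 : 0 < b := by omega
  set g : ℕ → ℝ := fun t => if h : t < d then z ⟨t, h⟩ else 1 with hg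
  have hg0 : ∀ t, 0 ≤ g t := by
    intro t; simp only [hg]; split
    · exact (hz _).1
    · norm_num
  have hg1 : ∀ t, g t ≤ 1 := by
    intro t; simp only [hg]; split
    · exact (hz _).2
    · norm_num
  set Qf : ℕ → ℕ := fun l => b ^ (m - d + 1 + l) with hQf
  set Cf : ℕ → ℕ := fun l => (⌈g (d - 1 - l) * (b : ℝ) ^ (m - (d - 1 - l))⌉).toNat with hCf
  have hQpos : ∀ l, 0 < Qf l := fun l => pow_pos hb0 _
  have hdvd : ∀ l, Qf l ∣ Qf (l + 1) := fun l => pow_dvd_pow b (by omega)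
  have hCQ : ∀ l, Cf l ≤ Qf l := by
    intro l
    have h1 : m - (d - 1 - l) ≤ m - d + 1 + l := by omega
    have h2 : Cf l ≤ b ^ (m - (d - 1 - l)) := by
      simp only [hCf]
      rw [Int.toNat_le]
      have : (((b : ℤ) ^ (m - (d - 1 - l)) : ℤ) : ℝ) = (b : ℝ) ^ (m - (d - 1 - l)) := by push_cast; ring
      rw [show ((b ^ (m - (d - 1 - l)) : ℕ) : ℤ) = (b : ℤ) ^ (m - (d - 1 - l)) from by push_cast; ring]
      rw [Int.ceil_le, this]
      nlinarith [hg1 (d - 1 - l), hg0 (d - 1 - l), pow_pos (show (0:ℝ) < b by positivity) (m - (d - 1 - l))]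
    calc Cf l ≤ b ^ (m - (d - 1 - l)) := h2
      _ ≤ b ^ (m - d + 1 + l) := Nat.pow_le_pow_right hb0 h1
  have hkey := key Qf Cf hQpos hdvd hCQ d (b ^ m)
  -- predicate equivalence
  have hequiv : ∀ i : ℕ, (∀ j : Fin d, Int.fract ((i : ℝ) * (b : ℝ) ^ (j : ℕ) / ((b : ℝ) ^ m)) < z j)
      ↔ (∀ l < d, i % Qf l < Cf l) := by
    intro i
    have hiff : ∀ j : Fin d, (Int.fract ((i : ℝ) * (b : ℝ) ^ (j : ℕ) / ((b : ℝ) ^ m)) < z j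
        ↔ i % Qf (d - 1 - (j : ℕ)) < Cf (d - 1 - (j : ℕ))) := by
      intro j
      have hj : (j : ℕ) < d := j.isLt
      have hl : d - 1 - (d - 1 - (j : ℕ)) = (j : ℕ) := by omega
      have hQ : Qf (d - 1 - (j : ℕ)) = b ^ (m - (j : ℕ)) := by
        simp only [hQf]; congr 1; omega
      have hC : Cf (d - 1 - (j : ℕ)) = (⌈z j * (b : ℝ) ^ (m - (j : ℕ))⌉).toNat := by
        simp only [hCf, hl]
        congr 2
        · simp only [hg]
          rw [dif_pos hj]
      have hexp : (i : ℝ) * (b : ℝ) ^ (j : ℕ) / ((b : ℝ) ^ m)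
          = ((i * b ^ (j : ℕ) : ℕ) : ℝ) / ((b : ℝ) ^ ((m - (j : ℕ)) + (j : ℕ))) := by
        rw [show (m - (j : ℕ)) + (j : ℕ) = m from by omega]
        push_cast; ring
      rw [hexp, hQ, hC, frac_iff b hb0 (m - (j : ℕ)) (j : ℕ) i (z j)]
    constructor
    · intro h l hl
      have hdl : d - 1 - (d - 1 - l) = l := by omega
      have := (hiff ⟨d - 1 - l, by omega⟩).mp (h ⟨d - 1 - l, by omega⟩)
      simpa [hdl] using this
    · intro h j
      exact (hiff j).mpr (h _ (by omega))
  -- card equality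
  have hcard : Nat.card {i : Fin (b ^ m) // ∀ j : Fin d,
        Int.fract ((i : ℝ) * (b : ℝ) ^ (j : ℕ) / (b ^ m : ℝ)) < z j}
      = ((range (b ^ m)).filter (fun s => ∀ l < d, s % Qf l < Cf l)).card := by
    rw [Nat.card_eq_fintype_card, Fintype.card_subtype]
    apply Finset.card_bij (fun (i : Fin (b ^ m)) _ => (i : ℕ))
    · intro i hi
      simp only [Finset.mem_filter, Finset.mem_univ, true_and] at hi
      simp only [Finset.mem_filter, Finset.mem_range]
      exact ⟨i.isLt, (hequiv i).mp (by exact_mod_cast hi)⟩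
    · intro a ha b hb h
      exact Fin.ext h
    · intro s hs
      simp only [Finset.mem_filter, Finset.mem_range] at hs
      refine ⟨⟨s, hs.1⟩, ?_, rfl⟩
      simp only [Finset.mem_filter, Finset.mem_univ, true_and]
      exact_mod_cast (hequiv s).mpr hs.2
  -- real-number conclusion
  set N := ((range (b ^ m)).filter (fun s => ∀ l < d, s % Qf l < Cf l)).card with hN
  rw [hcard]
  have hbm : (0:ℝ) < (b : ℝ) ^ m := by positivity
  rw [le_div_iff₀ (by exact_mod_cast pow_pos hb0 m)]
  -- products
  have hzg : ∏ j, z j = ∏ t ∈ range d, g t := by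
    rw [← Fin.prod_univ_eq_prod_range]
    apply Finset.prod_congr rfl
    intro j _
    simp only [hg, dif_pos j.isLt]
  have hQprod : ∏ l ∈ range d, ((Qf l : ℝ)) = ∏ l ∈ range d, (b : ℝ) ^ (m - (d - 1 - l)) := by
    apply Finset.prod_congr rfl
    intro l hl
    simp only [Finset.mem_range] at hl
    simp only [hQf]
    rw [show m - d + 1 + l = m - (d - 1 - l) from by omega]
    push_cast; ring
  have hQR : (0:ℝ) < ∏ l ∈ range d, ((Qf l : ℝ)) := by
    apply Finset.prod_pos
    intro l _
    exact_mod_cast hQpos l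
  have hCge : ∀ l ∈ range d, g (d - 1 - l) * (b : ℝ) ^ (m - (d - 1 - l)) ≤ (Cf l : ℝ) := by
    intro l _
    simp only [hCf]
    have h1 : g (d - 1 - l) * (b : ℝ) ^ (m - (d - 1 - l)) ≤ (⌈g (d - 1 - l) * (b : ℝ) ^ (m - (d - 1 - l))⌉ : ℝ) := Int.le_ceil _
    have h2 : ((⌈g (d - 1 - l) * (b : ℝ) ^ (m - (d - 1 - l))⌉ : ℤ) : ℝ) ≤ ((⌈g (d - 1 - l) * (b : ℝ) ^ (m - (d - 1 - l))⌉.toNat : ℕ) : ℝ) := by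
      exact_mod_cast Int.self_le_toNat _
    linarith
  have hprodle : (∏ t ∈ range d, g t) * ∏ l ∈ range d, ((Qf l : ℝ)) ≤ ∏ l ∈ range d, ((Cf l : ℝ)) := by
    have h1 : ∏ l ∈ range d, (g (d - 1 - l) * (b : ℝ) ^ (m - (d - 1 - l))) ≤ ∏ l ∈ range d, ((Cf l : ℝ)) := by
      apply Finset.prod_le_prod
      · intro l _
        have := hg0 (d - 1 - l)
        positivity
      · exact hCge
    calc (∏ t ∈ range d, g t) * ∏ l ∈ range d, ((Qf l : ℝ))
        = ∏ l ∈ range d, (g (d - 1 - l) * (b : ℝ) ^ (m - (d - 1 - l))) := by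
          rw [hQprod, ← Finset.prod_range_reflect g d, ← Finset.prod_mul_distrib]
      _ ≤ ∏ l ∈ range d, ((Cf l : ℝ)) := h1
  -- combine
  have hkeyR : ((b ^ m : ℕ) : ℝ) * ∏ l ∈ range d, ((Cf l : ℝ)) ≤ (N : ℝ) * ∏ l ∈ range d, ((Qf l : ℝ)) := by
    have := hkey
    rw [hN]
    exact_mod_cast this
  have hbmN : ((b ^ m : ℕ) : ℝ) = (b : ℝ) ^ m := by push_cast; ring
  have hfinal : (∏ t ∈ range d, g t) * (b : ℝ) ^ m ≤ (N : ℝ) := by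
    have h3 : (b : ℝ) ^ m * ((∏ t ∈ range d, g t) * ∏ l ∈ range d, ((Qf l : ℝ)))
        ≤ (N : ℝ) * ∏ l ∈ range d, ((Qf l : ℝ)) := by
      calc (b : ℝ) ^ m * ((∏ t ∈ range d, g t) * ∏ l ∈ range d, ((Qf l : ℝ)))
          ≤ (b : ℝ) ^ m * ∏ l ∈ range d, ((Cf l : ℝ)) := by
            apply mul_le_mul_of_nonneg_left hprodle (le_of_lt hbm)
        _ ≤ (N : ℝ) * ∏ l ∈ range d, ((Qf l : ℝ)) := by rw [← hbmN]; exact hkeyR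
    have := le_of_mul_le_mul_right (by linarith [h3] : ((∏ t ∈ range d, g t) * (b : ℝ) ^ m) * ∏ l ∈ range d, ((Qf l : ℝ)) ≤ (N : ℝ) * ∏ l ∈ range d, ((Qf l : ℝ))) hQR
    exact this
  rw [hzg]
  exact_mod_cast hfinal
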